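/- Let μ, μ' be positive reals with μ ≠ μ', and let F, G : (0,∞) → ℝ satisfy F'' + ((μ²+1/4)/x² + κ/x − 1/4)F = 0 and G'' + ((μ'²+1/4)/x² + κ/x − 1/4)G = 0, with F, G, F', G' all tending to 0 as x → ∞, and suppose ∫_0^∞ F(x)G(x)/x² dx converges and the boundary Wronskian F(ξ)G'(ξ) − G(ξ)F'(ξ) has a limit L as ξ → 0+. Then ∫_0^∞ F(x)G(x)/x² dx = −L/(μ² − μ'²). -/

import Mathlib

open Real Set Filter MeasureTheory

theorem green_identity_on_halfline
    (μ μ' κ L : ℝ) (hμ : 0 < μ) (hμ' : 0 < μ') (hne : μ ≠ μ')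
    (F F' F'' G G' G'' : ℝ → ℝ)
    (hF : ∀ x ∈ Ioi (0 : ℝ), HasDerivAt F (F' x) x)
    (hF' : ∀ x ∈ Ioi (0 : ℝ), HasDerivAt F' (F'' x) x)
    (hG : ∀ x ∈ Ioi (0 : ℝ), HasDerivAt G (G' x) x)
    (hG' : ∀ x ∈ Ioi (0 : ℝ), HasDerivAt G' (G'' x) x)
    (hFeq : ∀ x ∈ Ioi (0 : ℝ),
      F'' x + ((μ ^ 2 + 1 / 4) / x ^ 2 + κ / x - 1 / 4) * F x = 0)
    (hGeq : ∀ x ∈ Ioi (0 : ℝ),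
      G'' x + ((μ' ^ 2 + 1 / 4) / x ^ 2 + κ / x - 1 / 4) * G x = 0)
    (hF0 : Tendsto F atTop (nhds 0)) (hF'0 : Tendsto F' atTop (nhds 0))
    (hG0 : Tendsto G atTop (nhds 0)) (hG'0 : Tendsto G' atTop (nhds 0))
    (hint : IntegrableOn (fun x => F x * G x / x ^ 2) (Ioi 0))
    (hL : Tendsto (fun ξ => F ξ * G' ξ - G ξ * F' ξ)
      (nhdsWithin 0 (Ioi 0)) (nhds L)) :
    ∫ x in Ioi (0 : ℝ), F x * G x / x ^ 2 = -L / (μ ^ 2 - μ' ^ 2) := by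
  set c : ℝ := μ ^ 2 - μ' ^ 2 with hc_def
  have hc : c ≠ 0 := by
    intro h
    apply hne
    have : μ ^ 2 = μ' ^ 2 := by linarith [hc_def ▸ h]
    nlinarith
  set W : ℝ → ℝ := fun x => F x * G' x - G x * F' x with hW_def
  set fg : ℝ → ℝ := fun x => F x * G x / x ^ 2 with hfg_def
  -- derivative of the Wronskian
  have hWderiv : ∀ x ∈ Ioi (0 : ℝ), HasDerivAt W (c * fg x) x := by
    intro x hx
    have h1 := ((hF x hx).mul (hG' x hx)).sub ((hG x hx).mul (hF' x hx))
    have h2 : F' x * G' x + F x * G'' x - (G' x * F' x + G x * F'' x)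
        = c * fg x := by
      simp only [hfg_def, hc_def]
      linear_combination F x * hGeq x hx - G x * hFeq x hx
    rw [h2] at h1
    exact h1
  -- W tends to 0 at infinity
  have hWtop : Tendsto W atTop (nhds 0) := by
    have := (hF0.mul hG'0).sub (hG0.mul hF'0)
    simpa using this
  -- the tail integral identity
  have htail : ∀ a ∈ Ioi (0 : ℝ), c * ∫ x in Ioi a, fg x = - W a := by
    intro a ha
    have hintc : IntegrableOn (fun x => c * fg x) (Ioi a) :=
      ((hint.mono_set (Ioi_subset_Ioi (le_of_lt ha))).const_mul c)
    have := integral_Ioi_of_hasDerivAt_of_tendsto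
      (f := W) (f' := fun x => c * fg x) (a := a) (m := 0)
      ((hWderiv a ha).continuousAt.continuousWithinAt)
      (fun x hx => hWderiv x (lt_trans ha hx : (0:ℝ) < x)) hintc hWtop
    simp only [MeasureTheory.integral_const_mul] at this
    rw [this]; ring
  -- the tail integral tends to the full integral
  have hsmall : Tendsto (fun a => ∫ x in Ioc (0:ℝ) a, fg x)
      (nhdsWithin 0 (Ioi 0)) (nhds 0) := by
    have hind : Integrable (Set.indicator (Ioi (0:ℝ)) fg) := by
      rwa [integrable_indicator_iff measurableSet_Ioi]
    have hmeas : Tendsto (fun a : ℝ => volume (Ioc (0:ℝ) a))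
        (nhdsWithin 0 (Ioi 0)) (nhds 0) := by
      have : Tendsto (fun a : ℝ => ENNReal.ofReal a) (nhdsWithin 0 (Ioi 0))
          (nhds (ENNReal.ofReal 0)) :=
        (ENNReal.continuous_ofReal.tendsto 0).comp nhdsWithin_le_nhds
      simpa [Real.volume_Ioc] using this
    have h0 := hind.tendsto_setIntegral_nhds_zero
      (s := fun a : ℝ => Ioc (0:ℝ) a) hmeas
    refine h0.congr' ?_
    filter_upwards [self_mem_nhdsWithin] with a (ha : (0:ℝ) < a)
    refine setIntegral_congr_fun measurableSet_Ioc ?_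
    intro x hx
    exact Set.indicator_of_mem (hx.1 : x ∈ Ioi (0:ℝ)) fg
  have hsplit : ∀ a ∈ Ioi (0:ℝ),
      ∫ x in Ioi (0:ℝ), fg x = (∫ x in Ioc (0:ℝ) a, fg x) + ∫ x in Ioi a, fg x := by
    intro a ha
    rw [← MeasureTheory.setIntegral_union (Ioc_disjoint_Ioi le_rfl) measurableSet_Ioi
      (hint.mono_set Ioc_subset_Ioi_self) (hint.mono_set (Ioi_subset_Ioi (le_of_lt ha))),
      Ioc_union_Ioi_eq_Ioi (le_of_lt ha)]
  have htailTendsto : Tendsto (fun a => ∫ x in Ioi a, fg x)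
      (nhdsWithin 0 (Ioi 0)) (nhds (∫ x in Ioi (0:ℝ), fg x)) := by
    have h1 : Tendsto (fun a => (∫ x in Ioi (0:ℝ), fg x) - ∫ x in Ioc (0:ℝ) a, fg x)
        (nhdsWithin 0 (Ioi 0)) (nhds ((∫ x in Ioi (0:ℝ), fg x) - 0)) :=
      tendsto_const_nhds.sub hsmall
    rw [sub_zero] at h1
    refine h1.congr' ?_
    filter_upwards [self_mem_nhdsWithin] with a ha
    rw [hsplit a ha]; ring
  -- identify the limit
  have hWlim : Tendsto W (nhdsWithin 0 (Ioi 0))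
      (nhds (-(c * ∫ x in Ioi (0:ℝ), fg x))) := by
    have h2 : Tendsto (fun a => -(c * ∫ x in Ioi a, fg x)) (nhdsWithin 0 (Ioi 0))
        (nhds (-(c * ∫ x in Ioi (0:ℝ), fg x))) :=
      ((tendsto_const_nhds.mul htailTendsto)).neg
    refine h2.congr' ?_
    filter_upwards [self_mem_nhdsWithin] with a ha
    rw [htail a ha]; ring
  have hLe : L = -(c * ∫ x in Ioi (0:ℝ), fg x) :=
    tendsto_nhds_unique hL hWlim
  have : c * ∫ x in Ioi (0:ℝ), fg x = -L := by linarith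
  field_simp [hc_def] at this ⊢
  linarith
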